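/- Let 𝐀 and 𝐁 be σ-structures with the same iterated degree sequence. Then the partition of (A ∪ B, C_𝐀 ∪ C_𝐁) induced by the stable iterated degrees on the disjoint union 𝐀 ⊔ 𝐁 is an equitable partition in which every class contains equally many elements (resp. constraints) from 𝐀 and from 𝐁; hence 𝐀 and 𝐁 have a common equitable partition. -/

import Mathlib

open Finset BigOperators

variable {σ : Type} [Fintype σ] [DecidableEq σ]

/-- Edge labels of the factor graph of a `σ`-structure: pairs `(S,R)` with
`S ⊆ [ar R]`. -/
abbrev FLab (ar : σ → ℕ) : Type := Σ R : σ, Finset (Fin (ar R))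

/-- The type of iterated degrees (colours) after `n` refinement rounds on the labelled
factor graph. The initial colour (a `Bool`) distinguishes elements from constraints. -/
def FColor (ar : σ → ℕ) : ℕ → Type
  | 0 => Bool
  | n + 1 => FColor ar n × Multiset (FLab ar × FColor ar n)

instance fColorDecEq (ar : σ → ℕ) : ∀ n, DecidableEq (FColor ar n)
  | 0 => inferInstanceAs (DecidableEq Bool)
  | n + 1 =>
      letI := fColorDecEq ar n
      inferInstanceAs (DecidableEq (FColor ar n × Multiset (FLab ar × FColor ar n)))

/-- The constraints of a structure: pairs of a symbol `R` and a tuple in `R`'s relation. -/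
abbrev Cstr (ar : σ → ℕ) {D : Type} (rel : ∀ R : σ, Finset (Fin (ar R) → D)) : Type :=
  Σ R : σ, {x : Fin (ar R) → D // x ∈ rel R}

/-- The label of the factor-graph edge between an element `a` and a constraint `c`. -/
def fLabOf (ar : σ → ℕ) {D : Type} [DecidableEq D] {rel : ∀ R : σ, Finset (Fin (ar R) → D)}
    (a : D) (c : Cstr ar rel) : FLab ar :=
  ⟨c.1, Finset.univ.filter (fun i => c.2.1 i = a)⟩

/-- The iterated degree `δ_n` of a vertex of the labelled factor graph of the structure
`rel` (a vertex is either an element, `Sum.inl`, or a constraint, `Sum.inr`):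
`δ_0` distinguishes elements from constraints and
`δ_{n+1}(v) = (δ_n(v), {{(ℓ_{v,w}, δ_n(w)) : w a factor-graph neighbour of v}})`. -/
def fdeg (ar : σ → ℕ) {D : Type} [Fintype D] [DecidableEq D]
    (rel : ∀ R : σ, Finset (Fin (ar R) → D)) :
    (n : ℕ) → (D ⊕ Cstr ar rel) → FColor ar n
  | 0, Sum.inl _ => false
  | 0, Sum.inr _ => true
  | n + 1, Sum.inl a =>
      (fdeg ar rel n (Sum.inl a),
        ((Finset.univ.filter (fun c : Cstr ar rel => ∃ i, c.2.1 i = a)).val.map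
          (fun c => (fLabOf ar a c, fdeg ar rel n (Sum.inr c)))))
  | n + 1, Sum.inr c =>
      (fdeg ar rel n (Sum.inr c),
        ((Finset.univ.filter (fun a : D => ∃ i, c.2.1 i = a)).val.map
          (fun a => (fLabOf ar a c, fdeg ar rel n (Sum.inl a)))))

/-- Two similar structures have the same iterated degree sequence if, for every `n`,
the multisets of iterated degrees of their factor-graph vertices coincide. -/
def SameIDS (ar : σ → ℕ) {D₁ D₂ : Type} [Fintype D₁] [DecidableEq D₁]
    [Fintype D₂] [DecidableEq D₂]
    (rel₁ : ∀ R : σ, Finset (Fin (ar R) → D₁))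
    (rel₂ : ∀ R : σ, Finset (Fin (ar R) → D₂)) : Prop :=
  ∀ n : ℕ,
    Multiset.map (fdeg ar rel₁ n) Finset.univ.val =
      Multiset.map (fdeg ar rel₂ n) Finset.univ.val

/-- A homomorphism between similar relational structures. -/
def IsHom (ar : σ → ℕ) {DX DA : Type}
    (relX : ∀ R : σ, Finset (Fin (ar R) → DX))
    (relA : ∀ R : σ, Finset (Fin (ar R) → DA))
    (h : DX → DA) : Prop :=
  ∀ (R : σ) (x : Fin (ar R) → DX), x ∈ relX R → (fun i => h (x i)) ∈ relA R
/-- A pair of colourings (of elements by `I` and of constraints by `J`) of a structure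
is an equitable partition with parameters `cpar`, `dpar` if, for every element class,
constraint class and label, the number of constraints of the given class incident to a
fixed element with the given label equals `cpar`, and dually for `dpar`. -/
def IsEquitableRel (ar : σ → ℕ) {D I J : Type} [Fintype D] [DecidableEq D]
    [DecidableEq I] [DecidableEq J]
    (rel : ∀ R : σ, Finset (Fin (ar R) → D))
    (cE : D → I) (cC : Cstr ar rel → J)
    (cpar : I → J → FLab ar → ℕ) (dpar : J → I → FLab ar → ℕ) : Prop :=
  (∀ (a : D) (j : J) (ℓ : FLab ar),
      (Finset.univ.filter (fun c : Cstr ar rel =>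
        cC c = j ∧ (∃ i, c.2.1 i = a) ∧ fLabOf ar a c = ℓ)).card = cpar (cE a) j ℓ) ∧
  (∀ (c : Cstr ar rel) (i : I) (ℓ : FLab ar),
      (Finset.univ.filter (fun a : D =>
        cE a = i ∧ (∃ i', c.2.1 i' = a) ∧ fLabOf ar a c = ℓ)).card = dpar (cC c) i ℓ)

instance fColorInhabited (ar : σ → ℕ) : ∀ n, Inhabited (FColor ar n)
  | 0 => ⟨false⟩
  | n + 1 => letI := fColorInhabited ar n; ⟨(default, 0)⟩

/-- Projection of a colour to round `0`. -/
def fProj0 (ar : σ → ℕ) : ∀ n, FColor ar n → Bool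
  | 0, b => b
  | n + 1, p => fProj0 ar n p.1

/-- Labelled neighbour multiset in the factor graph of a single structure. -/
def fNB (ar : σ → ℕ) {D : Type} [Fintype D] [DecidableEq D]
    (rel : ∀ R : σ, Finset (Fin (ar R) → D)) :
    (D ⊕ Cstr ar rel) → Multiset (FLab ar × (D ⊕ Cstr ar rel))
  | Sum.inl a => (Finset.univ.filter (fun c : Cstr ar rel => ∃ i, c.2.1 i = a)).val.map
      (fun c => (fLabOf ar a c, Sum.inr c))
  | Sum.inr c => (Finset.univ.filter (fun a : D => ∃ i, c.2.1 i = a)).val.map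
      (fun a => (fLabOf ar a c, Sum.inl a))

lemma fdeg_succ (ar : σ → ℕ) {D : Type} [Fintype D] [DecidableEq D]
    (rel : ∀ R : σ, Finset (Fin (ar R) → D)) (n : ℕ) (v : D ⊕ Cstr ar rel) :
    fdeg ar rel (n + 1) v =
      (fdeg ar rel n v, (fNB ar rel v).map (fun p => (p.1, fdeg ar rel n p.2))) := by
  cases v <;> simp only [fdeg, fNB, Multiset.map_map] <;> rfl

lemma fProj0_fdeg (ar : σ → ℕ) {D : Type} [Fintype D] [DecidableEq D]
    (rel : ∀ R : σ, Finset (Fin (ar R) → D)) (n : ℕ) (v : D ⊕ Cstr ar rel) :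
    fProj0 ar n (fdeg ar rel n v) = (Sum.isRight v) := by
  induction n with
  | zero => cases v <;> rfl
  | succ n ih => rw [fdeg_succ]; exact ih
section Combined

variable (ar : σ → ℕ) {DA DB : Type} [Fintype DA] [DecidableEq DA]
  [Fintype DB] [DecidableEq DB]
  (relA : ∀ R : σ, Finset (Fin (ar R) → DA))
  (relB : ∀ R : σ, Finset (Fin (ar R) → DB))

/-- Vertices of the factor graph of the disjoint union. -/
abbrev FVV : Type := (DA ⊕ Cstr ar relA) ⊕ (DB ⊕ Cstr ar relB)

/-- Iterated degree on the disjoint union. -/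
def FFF (n : ℕ) : FVV ar relA relB → FColor ar n :=
  Sum.elim (fdeg ar relA n) (fdeg ar relB n)

/-- Labelled neighbours on the disjoint union. -/
def FNBB : FVV ar relA relB → Multiset (FLab ar × FVV ar relA relB)
  | Sum.inl v => (fNB ar relA v).map (fun p => (p.1, Sum.inl p.2))
  | Sum.inr v => (fNB ar relB v).map (fun p => (p.1, Sum.inr p.2))

lemma FFF_succ (n : ℕ) (v : FVV ar relA relB) :
    FFF ar relA relB (n + 1) v =
      (FFF ar relA relB n v,
        (FNBB ar relA relB v).map (fun p => (p.1, FFF ar relA relB n p.2))) := by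
  cases v <;>
    simp only [FFF, FNBB, Sum.elim_inl, Sum.elim_inr, fdeg_succ, Multiset.map_map] <;> rfl

/-- Number of colour classes after `n` rounds. -/
def kcl (n : ℕ) : ℕ :=
  ((Finset.univ : Finset (FVV ar relA relB)).image (FFF ar relA relB n)).card

lemma image_fst (n : ℕ) :
    ((Finset.univ : Finset (FVV ar relA relB)).image (FFF ar relA relB (n + 1))).image
        Prod.fst =
      Finset.univ.image (FFF ar relA relB n) := by
  refine Finset.image_image.trans ?_
  apply Finset.image_congr
  intro v _
  show (FFF ar relA relB (n + 1) v).1 = FFF ar relA relB n v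
  rw [FFF_succ]

lemma kcl_mono (n : ℕ) : kcl ar relA relB n ≤ kcl ar relA relB (n + 1) := by
  rw [kcl, ← image_fst]
  exact Finset.card_image_le

/-- One refinement round does not split any class. -/
def StepEq (n : ℕ) : Prop :=
  ∀ v w : FVV ar relA relB,
    FFF ar relA relB n v = FFF ar relA relB n w →
      FFF ar relA relB (n + 1) v = FFF ar relA relB (n + 1) w

lemma stepEq_of_card {n : ℕ} (h : kcl ar relA relB n = kcl ar relA relB (n + 1)) :
    StepEq ar relA relB n := by
  have hinj : Set.InjOn Prod.fst
      ((Finset.univ.image (FFF ar relA relB (n + 1)) : Finset (FColor ar (n + 1))) :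
        Set (FColor ar (n + 1))) := by
    refine Finset.card_image_iff.mp ?_
    rw [image_fst]
    exact h
  intro v w hvw
  have hv : FFF ar relA relB (n + 1) v ∈ Finset.univ.image (FFF ar relA relB (n + 1)) :=
    Finset.mem_image_of_mem _ (Finset.mem_univ v)
  have hw : FFF ar relA relB (n + 1) w ∈ Finset.univ.image (FFF ar relA relB (n + 1)) :=
    Finset.mem_image_of_mem _ (Finset.mem_univ w)
  apply hinj hv hw
  show (FFF ar relA relB (n + 1) v).1 = (FFF ar relA relB (n + 1) w).1
  rw [FFF_succ, FFF_succ]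
  exact hvw

lemma stepEq_succ {n : ℕ} (h : StepEq ar relA relB n) : StepEq ar relA relB (n + 1) := by
  classical
  set L : FColor ar n → FColor ar (n + 1) := fun κ =>
    if hx : ∃ v, FFF ar relA relB n v = κ then FFF ar relA relB (n + 1) hx.choose
    else default with hLdef
  have hLspec : ∀ v, FFF ar relA relB (n + 1) v = L (FFF ar relA relB n v) := by
    intro v
    have hx : ∃ w, FFF ar relA relB n w = FFF ar relA relB n v := ⟨v, rfl⟩
    rw [hLdef]
    simp only
    rw [dif_pos hx]
    exact (h _ _ hx.choose_spec).symm
  intro v w hvw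
  rw [FFF_succ ar relA relB n v, FFF_succ ar relA relB n w] at hvw
  obtain ⟨h1, h2⟩ := (Prod.mk.injEq _ _ _ _).mp hvw
  rw [FFF_succ ar relA relB (n + 1) v, FFF_succ ar relA relB (n + 1) w]
  apply (Prod.mk.injEq _ _ _ _).mpr
  refine ⟨by rw [FFF_succ ar relA relB n v, FFF_succ ar relA relB n w, h1, h2], ?_⟩
  have hfun : (fun p : FLab ar × FVV ar relA relB => (p.1, FFF ar relA relB (n + 1) p.2)) =
      (fun q : FLab ar × FColor ar n => (q.1, L q.2)) ∘
        (fun p : FLab ar × FVV ar relA relB => (p.1, FFF ar relA relB n p.2)) := by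
    funext p
    simp [Function.comp, hLspec]
  rw [hfun, ← Multiset.map_map, ← Multiset.map_map, h2]

lemma stepEq_mono {n m : ℕ} (hnm : n ≤ m) (h : StepEq ar relA relB n) :
    StepEq ar relA relB m := by
  induction m with
  | zero => exact Nat.le_zero.mp hnm ▸ h
  | succ m ih =>
      rcases Nat.lt_or_ge n (m + 1) with hlt | hge
      · exact stepEq_succ ar relA relB (ih (Nat.lt_succ_iff.mp hlt))
      · exact (Nat.le_antisymm hnm hge) ▸ h

lemma stepEq_main :
    StepEq ar relA relB
      (2 * (Fintype.card DA + Fintype.card (Cstr ar relA) +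
        Fintype.card DB + Fintype.card (Cstr ar relB))) := by
  classical
  set M : ℕ := Fintype.card (FVV ar relA relB) with hM
  have hkle : ∀ n, kcl ar relA relB n ≤ M := by
    intro n
    calc kcl ar relA relB n ≤ (Finset.univ : Finset (FVV ar relA relB)).card :=
          Finset.card_image_le
      _ = M := by rw [hM, Fintype.card]
  have hex : ∃ n ≤ M, kcl ar relA relB n = kcl ar relA relB (n + 1) := by
    by_contra hc
    push_neg at hc
    have hgrow : ∀ n, n ≤ M + 1 → n ≤ kcl ar relA relB n := by
      intro n
      induction n with
      | zero => intro _; exact Nat.zero_le _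
      | succ n ih =>
          intro hn
          have hn' : n ≤ M := Nat.lt_succ_iff.mp hn
          have h1 : n ≤ kcl ar relA relB n := ih (Nat.le_succ_of_le hn')
          have h2 : kcl ar relA relB n < kcl ar relA relB (n + 1) :=
            Nat.lt_of_le_of_ne (kcl_mono ar relA relB n) (hc n hn')
          omega
    have := hgrow (M + 1) le_rfl
    have := hkle (M + 1)
    omega
  obtain ⟨n, hn, hkcl⟩ := hex
  have hMcard : M = Fintype.card DA + Fintype.card (Cstr ar relA) +
      Fintype.card DB + Fintype.card (Cstr ar relB) := by
    rw [hM]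
    simp [Fintype.card_sum]
    ring
  refine stepEq_mono ar relA relB ?_ (stepEq_of_card ar relA relB hkcl)
  omega

end Combined
/-- Second component of a colour at a successor level. -/
def fSnd (ar : σ → ℕ) (n : ℕ) (κ : FColor ar (n + 1)) :
    Multiset (FLab ar × FColor ar n) := κ.2

lemma card_cstr_count (ar : σ → ℕ) {D : Type} [Fintype D] [DecidableEq D]
    (rel : ∀ R : σ, Finset (Fin (ar R) → D)) (n : ℕ) (a : D) (j : FColor ar n)
    (ℓ : FLab ar) :
    (Finset.univ.filter (fun c : Cstr ar rel =>
        fdeg ar rel n (Sum.inr c) = j ∧ (∃ i, c.2.1 i = a) ∧ fLabOf ar a c = ℓ)).card =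
      Multiset.count (ℓ, j) (fSnd ar n (fdeg ar rel (n + 1) (Sum.inl a))) := by
  classical
  have hrfl : fSnd ar n (fdeg ar rel (n + 1) (Sum.inl a)) =
      (Finset.univ.filter (fun c : Cstr ar rel => ∃ i, c.2.1 i = a)).val.map
        (fun c => (fLabOf ar a c, fdeg ar rel n (Sum.inr c))) := rfl
  rw [hrfl, Multiset.count_map, Finset.filter_val, Multiset.filter_filter]
  rw [Finset.card, Finset.filter_val]
  congr 1
  apply Multiset.filter_congr
  intro c _
  constructor
  · rintro ⟨hj, hi, hl⟩
    exact ⟨by rw [hl, hj], hi⟩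
  · rintro ⟨hq, hi⟩
    rw [Prod.mk.injEq] at hq
    exact ⟨hq.2.symm, hi, hq.1.symm⟩

lemma card_elem_count (ar : σ → ℕ) {D : Type} [Fintype D] [DecidableEq D]
    (rel : ∀ R : σ, Finset (Fin (ar R) → D)) (n : ℕ) (c : Cstr ar rel) (i : FColor ar n)
    (ℓ : FLab ar) :
    (Finset.univ.filter (fun a : D =>
        fdeg ar rel n (Sum.inl a) = i ∧ (∃ i', c.2.1 i' = a) ∧ fLabOf ar a c = ℓ)).card =
      Multiset.count (ℓ, i) (fSnd ar n (fdeg ar rel (n + 1) (Sum.inr c))) := by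
  classical
  have hrfl : fSnd ar n (fdeg ar rel (n + 1) (Sum.inr c)) =
      (Finset.univ.filter (fun a : D => ∃ i', c.2.1 i' = a)).val.map
        (fun a => (fLabOf ar a c, fdeg ar rel n (Sum.inl a))) := rfl
  rw [hrfl, Multiset.count_map, Finset.filter_val, Multiset.filter_filter]
  rw [Finset.card, Finset.filter_val]
  congr 1
  apply Multiset.filter_congr
  intro a _
  constructor
  · rintro ⟨hj, hi, hl⟩
    exact ⟨by rw [hl, hj], hi⟩
  · rintro ⟨hq, hi⟩
    rw [Prod.mk.injEq] at hq
    exact ⟨hq.2.symm, hi, hq.1.symm⟩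

lemma count_map_univ {α β : Type*} [Fintype α] [DecidableEq β] (f : α → β) (b : β) :
    Multiset.count b (Multiset.map f Finset.univ.val) =
      (Finset.univ.filter (fun a => f a = b)).card := by
  classical
  rw [Multiset.count_map, Finset.card, Finset.filter_val]
  congr 1
  exact Multiset.filter_congr (fun x _ => eq_comm)

lemma count_split (ar : σ → ℕ) {D : Type} [Fintype D] [DecidableEq D]
    (rel : ∀ R : σ, Finset (Fin (ar R) → D)) (n : ℕ) (κ : FColor ar n) :
    Multiset.count κ
        (Multiset.map (fdeg ar rel n) (Finset.univ : Finset (D ⊕ Cstr ar rel)).val) =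
      (Finset.univ.filter (fun a : D => fdeg ar rel n (Sum.inl a) = κ)).card +
        (Finset.univ.filter (fun c : Cstr ar rel => fdeg ar rel n (Sum.inr c) = κ)).card := by
  classical
  rw [← Finset.univ_disjSum_univ, Finset.val_disjSum, Multiset.disjSum,
    Multiset.map_add, Multiset.count_add, Multiset.map_map, Multiset.map_map,
    count_map_univ, count_map_univ]
  rfl

lemma card_elem_zero (ar : σ → ℕ) {D : Type} [Fintype D] [DecidableEq D]
    (rel : ∀ R : σ, Finset (Fin (ar R) → D)) (n : ℕ) {κ : FColor ar n}
    (h : fProj0 ar n κ = true) :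
    (Finset.univ.filter (fun a : D => fdeg ar rel n (Sum.inl a) = κ)).card = 0 := by
  rw [Finset.card_eq_zero, Finset.filter_eq_empty_iff]
  intro a _ hc
  have h0 := fProj0_fdeg ar rel n (Sum.inl a)
  rw [hc, h] at h0
  simp at h0

lemma card_cstr_zero (ar : σ → ℕ) {D : Type} [Fintype D] [DecidableEq D]
    (rel : ∀ R : σ, Finset (Fin (ar R) → D)) (n : ℕ) {κ : FColor ar n}
    (h : fProj0 ar n κ = false) :
    (Finset.univ.filter (fun c : Cstr ar rel => fdeg ar rel n (Sum.inr c) = κ)).card = 0 := by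
  rw [Finset.card_eq_zero, Finset.filter_eq_empty_iff]
  intro c _ hc
  have h0 := fProj0_fdeg ar rel n (Sum.inr c)
  rw [hc, h] at h0
  simp at h0
/-- If two similar structures have the same iterated degree sequence, then the
partition induced by the stable iterated degrees (reached after at most
`2(|A| + |C_A| + |B| + |C_B|)` refinement rounds, as on the disjoint union) is a common
equitable partition: colouring elements and constraints by their stable iterated
degrees yields equitable partitions of both structures with the same parameters, and
every colour class contains equally many elements (resp. constraints) from the two
structures. -/
theorem stmt19 (ar : σ → ℕ) {DA DB : Type}
    [Fintype DA] [DecidableEq DA] [Fintype DB] [DecidableEq DB]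
    (relA : ∀ R : σ, Finset (Fin (ar R) → DA))
    (relB : ∀ R : σ, Finset (Fin (ar R) → DB))
    (hIDS : SameIDS ar relA relB) :
    letI N := 2 * (Fintype.card DA + Fintype.card (Cstr ar relA) +
      Fintype.card DB + Fintype.card (Cstr ar relB))
    ∃ (cpar : FColor ar N → FColor ar N → FLab ar → ℕ)
      (dpar : FColor ar N → FColor ar N → FLab ar → ℕ),
      IsEquitableRel ar relA (fun a => fdeg ar relA N (Sum.inl a))
        (fun c => fdeg ar relA N (Sum.inr c)) cpar dpar ∧
      IsEquitableRel ar relB (fun b => fdeg ar relB N (Sum.inl b))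
        (fun c => fdeg ar relB N (Sum.inr c)) cpar dpar ∧
      (∀ κ : FColor ar N,
        (Finset.univ.filter (fun a : DA => fdeg ar relA N (Sum.inl a) = κ)).card =
          (Finset.univ.filter (fun b : DB => fdeg ar relB N (Sum.inl b) = κ)).card) ∧
      (∀ κ : FColor ar N,
        (Finset.univ.filter (fun c : Cstr ar relA => fdeg ar relA N (Sum.inr c) = κ)).card =
          (Finset.univ.filter (fun c : Cstr ar relB => fdeg ar relB N (Sum.inr c) = κ)).card) := by
  classical
  set N := 2 * (Fintype.card DA + Fintype.card (Cstr ar relA) +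
      Fintype.card DB + Fintype.card (Cstr ar relB)) with hN
  have hstep : StepEq ar relA relB N := stepEq_main ar relA relB
  set L : FColor ar N → FColor ar (N + 1) := fun κ =>
    if hx : ∃ v, FFF ar relA relB N v = κ then FFF ar relA relB (N + 1) hx.choose
    else default with hLdef
  have hLspec : ∀ v, FFF ar relA relB (N + 1) v = L (FFF ar relA relB N v) := by
    intro v
    have hx : ∃ w, FFF ar relA relB N w = FFF ar relA relB N v := ⟨v, rfl⟩
    rw [hLdef]
    simp only
    rw [dif_pos hx]
    exact (hstep _ _ hx.choose_spec).symm
  refine ⟨fun i j ℓ => Multiset.count (ℓ, j) (fSnd ar N (L i)),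
    fun j i ℓ => Multiset.count (ℓ, i) (fSnd ar N (L j)), ⟨?_, ?_⟩, ⟨?_, ?_⟩, ?_, ?_⟩
  · intro a j ℓ
    beta_reduce
    rw [card_cstr_count,
      show L (fdeg ar relA N (Sum.inl a)) = fdeg ar relA (N + 1) (Sum.inl a) from
        (hLspec (Sum.inl (Sum.inl a))).symm]
  · intro c i ℓ
    beta_reduce
    rw [card_elem_count,
      show L (fdeg ar relA N (Sum.inr c)) = fdeg ar relA (N + 1) (Sum.inr c) from
        (hLspec (Sum.inl (Sum.inr c))).symm]
  · intro b j ℓ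
    beta_reduce
    rw [card_cstr_count,
      show L (fdeg ar relB N (Sum.inl b)) = fdeg ar relB (N + 1) (Sum.inl b) from
        (hLspec (Sum.inr (Sum.inl b))).symm]
  · intro c i ℓ
    beta_reduce
    rw [card_elem_count,
      show L (fdeg ar relB N (Sum.inr c)) = fdeg ar relB (N + 1) (Sum.inr c) from
        (hLspec (Sum.inr (Sum.inr c))).symm]
  · intro κ
    have hsum := congrArg (Multiset.count κ) (hIDS N)
    rw [count_split, count_split] at hsum
    cases hb : fProj0 ar N κ with
    | true =>
        rw [card_elem_zero ar relA N hb, card_elem_zero ar relB N hb]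
    | false =>
        rw [card_cstr_zero ar relA N hb, card_cstr_zero ar relB N hb] at hsum
        omega
  · intro κ
    have hsum := congrArg (Multiset.count κ) (hIDS N)
    rw [count_split, count_split] at hsum
    cases hb : fProj0 ar N κ with
    | true =>
        rw [card_elem_zero ar relA N hb, card_elem_zero ar relB N hb] at hsum
        omega
    | false =>
        rw [card_cstr_zero ar relA N hb, card_cstr_zero ar relB N hb]
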